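/- Let f : ℝ → ℝ be a function that is analytic on [0,1]. Then there exist a constant B > 1 (depending only on f) and a positive integer k₀ such that for every integer k ≥ k₀ and every κ ∈ (0,1], the following holds: if there exists x ∈ [0,1] with |f^{(k+1)}(x)| > κ, then there exists a closed interval [c,d] ⊆ [0,1] with d − c > κ/(128·B·k·4^{2k+1}·k!) such that for every y ∈ [c,d] and every integer i with 0 ≤ i ≤ k+1, |f^{(i)}(y)| > ( κ² / (64·B·k·4^{2k+1}·k!) )^{k+2−i}. -/

import Mathlib

set_option maxHeartbeats 1000000

open Set Filter
open scoped NNReal ENNReal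

lemma loc_bound (f : ℝ → ℝ) (x : ℝ) (hx : AnalyticAt ℝ f x) :
    ∃ ε > 0, ∃ C ρ : ℝ, 1 ≤ C ∧ 1 ≤ ρ ∧
      ∀ y ∈ Metric.ball x ε, ∀ n : ℕ,
        |iteratedDeriv n f y| ≤ C * n.factorial * ρ ^ n := by
  obtain ⟨p, r, hp⟩ := hx
  obtain ⟨r₀, hr₀pos, hr₀r⟩ : ∃ r₀ : ℝ≥0, 0 < r₀ ∧ (r₀ : ℝ≥0∞) < r := by
    obtain ⟨r₀, h1, h2⟩ := ENNReal.lt_iff_exists_nnreal_btwn.1 hp.r_pos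
    exact ⟨r₀, by exact_mod_cast h1, h2⟩
  obtain ⟨c, hc0, hCoef⟩ := p.nnnorm_mul_pow_le_of_lt_radius (hr₀r.trans_le hp.r_le)
  have hr₀ne : r₀ ≠ 0 := hr₀pos.ne'
  have hCoef' : ∀ j : ℕ, ‖p j‖₊ ≤ c * (r₀⁻¹) ^ j := by
    intro j
    have h1 : ‖p j‖₊ * r₀ ^ j * (r₀⁻¹) ^ j ≤ c * (r₀⁻¹) ^ j :=
      mul_le_mul_left (hCoef j) _
    rwa [mul_assoc, ← mul_pow, mul_inv_cancel₀ hr₀ne, one_pow, mul_one] at h1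
  have hquarter : (r₀ : ℝ≥0) / 4 ≤ r₀ := by
    nth_rewrite 2 [show r₀ = r₀ / 4 * 4 by rw [div_mul_cancel₀]; norm_num]
    exact le_mul_of_one_le_right zero_le (by norm_num)
  have key : ∀ z : ℝ, ‖z‖₊ ≤ r₀ / 4 → ∀ n : ℕ,
      ‖p.changeOrigin z n‖₊ ≤ 2 * c * (2 * r₀⁻¹) ^ n := by
    intro z hz n
    have hzrad : (‖z‖₊ : ℝ≥0∞) < p.radius :=
      lt_of_le_of_lt (by exact_mod_cast le_trans hz hquarter) (hr₀r.trans_le hp.r_le)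
    have h1 := p.nnnorm_changeOrigin_le n hzrad
    -- the bound for individual terms, in ℝ≥0
    have hterm : ∀ l : ℕ,
        ‖p (n + l)‖₊ * ‖z‖₊ ^ l ≤ c * r₀⁻¹ ^ (n + l) * (r₀ / 4) ^ l :=
      fun l => mul_le_mul' (hCoef' _) (pow_le_pow_left' hz _)
    -- cardinality bound
    have hcard : ∀ l : ℕ,
        (Fintype.card { s : Finset (Fin (n + l)) // s.card = l } : ℝ≥0∞) ≤ 2 ^ (n + l) := by
      intro l
      have h2 := Fintype.card_subtype_le (fun s : Finset (Fin (n + l)) => s.card = l)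
      rw [Fintype.card_finset, Fintype.card_fin] at h2
      exact_mod_cast Nat.cast_le.2 h2
    -- per-l bound after collapsing the fintype sum, computed in ℝ≥0
    have hbnd : ∀ l : ℕ, (2:ℝ≥0) ^ (n + l) * (c * r₀⁻¹ ^ (n + l) * (r₀ / 4) ^ l)
        = (2 * c * (2 * r₀⁻¹) ^ n) * (2⁻¹ : ℝ≥0) ^ l * 2⁻¹ := by
      intro l
      field_simp
      ring_nf
      have e1 : r₀ ^ l * r₀⁻¹ ^ l = 1 := by rw [← mul_pow, mul_inv_cancel₀ hr₀ne, one_pow]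
      have e2 : (1 / 4 : ℝ≥0) ^ l * 2 ^ l = (1 / 2) ^ l := by rw [← mul_pow]; norm_num
      calc _ = (r₀ ^ l * r₀⁻¹ ^ l) * r₀⁻¹ ^ n * ((1 / 4) ^ l * 2 ^ l) * 2 ^ n := by ring
        _ = _ := by rw [e1, e2]; ring
    -- coe of tsum is at most tsum of coes
    have coe_tsum_le : ∀ {α : Type} (g : α → ℝ≥0),
        ((∑' a, g a : ℝ≥0) : ℝ≥0∞) ≤ ∑' a, (g a : ℝ≥0∞) := by
      intro α g
      by_cases hg : Summable g
      · rw [ENNReal.coe_tsum hg]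
      · rw [tsum_eq_zero_of_not_summable hg]; simp
    have step2 : ∀ l : ℕ,
        (∑' _s : { s : Finset (Fin (n + l)) // s.card = l },
          ((‖p (n + l)‖₊ * ‖z‖₊ ^ l : ℝ≥0) : ℝ≥0∞))
        ≤ (((2:ℝ≥0) ^ (n + l) * (c * r₀⁻¹ ^ (n + l) * (r₀ / 4) ^ l) : ℝ≥0) : ℝ≥0∞) := by
      intro l
      rw [tsum_fintype]
      rw [Finset.sum_const, Finset.card_univ, nsmul_eq_mul]
      push_cast
      refine mul_le_mul' ?_ ?_
      · exact_mod_cast hcard l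
      · have := ENNReal.coe_le_coe.2 (hterm l)
        push_cast [ENNReal.coe_div (show (4:ℝ≥0) ≠ 0 by norm_num)] at this
        exact_mod_cast this
    have main : (‖p.changeOrigin z n‖₊ : ℝ≥0∞) ≤ ((2 * c * (2 * r₀⁻¹) ^ n : ℝ≥0) : ℝ≥0∞) := by
      calc (‖p.changeOrigin z n‖₊ : ℝ≥0∞)
          ≤ ((∑' s : Σ l : ℕ, { s : Finset (Fin (n + l)) // s.card = l },
              ‖p (n + s.1)‖₊ * ‖z‖₊ ^ s.1 : ℝ≥0) : ℝ≥0∞) := ENNReal.coe_le_coe.2 h1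
        _ ≤ ∑' s : Σ l : ℕ, { s : Finset (Fin (n + l)) // s.card = l },
              ((‖p (n + s.1)‖₊ * ‖z‖₊ ^ s.1 : ℝ≥0) : ℝ≥0∞) := coe_tsum_le _
        _ = ∑' (l : ℕ) (_s : { s : Finset (Fin (n + l)) // s.card = l }),
              ((‖p (n + l)‖₊ * ‖z‖₊ ^ l : ℝ≥0) : ℝ≥0∞) := ENNReal.tsum_sigma' _
        _ ≤ ∑' l : ℕ, (((2:ℝ≥0) ^ (n + l) * (c * r₀⁻¹ ^ (n + l) * (r₀ / 4) ^ l) : ℝ≥0) : ℝ≥0∞) :=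
              ENNReal.tsum_le_tsum step2
        _ = ∑' l : ℕ, (((2 * c * (2 * r₀⁻¹) ^ n) * (2⁻¹ : ℝ≥0) ^ l * 2⁻¹ : ℝ≥0) : ℝ≥0∞) := by
              congr 1; funext l; rw [hbnd l]
        _ = ((2 * c * (2 * r₀⁻¹) ^ n : ℝ≥0) : ℝ≥0∞) * 2⁻¹ * ∑' l : ℕ, (2⁻¹ : ℝ≥0∞) ^ l := by
              rw [← ENNReal.tsum_mul_left]
              congr 1; funext l
              push_cast [ENNReal.coe_inv hr₀ne, ENNReal.coe_inv (show (2:ℝ≥0) ≠ 0 by norm_num)]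
              ring
        _ = ((2 * c * (2 * r₀⁻¹) ^ n : ℝ≥0) : ℝ≥0∞) := by
              rw [ENNReal.tsum_geometric, ENNReal.one_sub_inv_two, inv_inv]
              rw [mul_assoc, ENNReal.inv_mul_cancel (by norm_num) (by norm_num), mul_one]
    exact ENNReal.coe_le_coe.1 main
  -- now conclude
  refine ⟨(r₀ : ℝ) / 4, by positivity, ((2 * c : ℝ≥0) : ℝ) + 1, ((2 * r₀⁻¹ : ℝ≥0) : ℝ) + 1,
    by nlinarith [(2 * c : ℝ≥0).coe_nonneg], by nlinarith [(2 * r₀⁻¹ : ℝ≥0).coe_nonneg], ?_⟩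
  intro y hy n
  set z := y - x with hzdef
  have hznn : ‖z‖₊ ≤ r₀ / 4 := by
    rw [← NNReal.coe_le_coe]
    rw [coe_nnnorm, Real.norm_eq_abs]
    have : |y - x| < (r₀ : ℝ) / 4 := by simpa [Real.dist_eq] using hy
    simpa using this.le
  have hzr : (‖z‖₊ : ℝ≥0∞) < r :=
    lt_of_le_of_lt (by exact_mod_cast hznn.trans hquarter) hr₀r
  have hq := hp.changeOrigin hzr
  rw [show x + z = y by ring] at hq
  have hfs := hq.factorial_smul (1 : ℝ) n
  have hid : iteratedDeriv n f y = iteratedFDeriv ℝ n f y (fun _ => (1:ℝ)) := rfl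
  have habs : |iteratedDeriv n f y| = n.factorial * ‖p.changeOrigin z n (fun _ => (1:ℝ))‖ := by
    rw [hid, ← hfs, nsmul_eq_mul, abs_mul]
    simp [Real.norm_eq_abs]
  have hop : ‖p.changeOrigin z n (fun _ => (1:ℝ))‖ ≤ ‖p.changeOrigin z n‖ := by
    have h2 := (p.changeOrigin z n).le_opNorm (fun _ => (1:ℝ))
    simpa using h2
  have hcoefbd : ‖p.changeOrigin z n‖ ≤ ((2 * c : ℝ≥0) : ℝ) * ((2 * r₀⁻¹ : ℝ≥0) : ℝ) ^ n := by
    have := key z hznn n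
    have h3 : (‖p.changeOrigin z n‖₊ : ℝ) ≤ ((2 * c * (2 * r₀⁻¹) ^ n : ℝ≥0) : ℝ) := by
      exact_mod_cast this
    rw [coe_nnnorm] at h3
    push_cast at h3 ⊢
    linarith
  have hmono : ((2 * c : ℝ≥0) : ℝ) * ((2 * r₀⁻¹ : ℝ≥0) : ℝ) ^ n
      ≤ (((2 * c : ℝ≥0) : ℝ) + 1) * ((((2 * r₀⁻¹ : ℝ≥0) : ℝ)) + 1) ^ n := by
    have h4 : ((2 * r₀⁻¹ : ℝ≥0) : ℝ) ^ n ≤ (((2 * r₀⁻¹ : ℝ≥0) : ℝ) + 1) ^ n :=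
      pow_le_pow_left₀ (by positivity) (by linarith) n
    have h5 : (0:ℝ) ≤ ((2 * c : ℝ≥0) : ℝ) := by positivity
    nlinarith [pow_nonneg (show (0:ℝ) ≤ ((2 * r₀⁻¹ : ℝ≥0) : ℝ) by positivity) n]
  calc |iteratedDeriv n f y| = n.factorial * ‖p.changeOrigin z n (fun _ => (1:ℝ))‖ := habs
    _ ≤ n.factorial * (((2 * c : ℝ≥0) : ℝ) * ((2 * r₀⁻¹ : ℝ≥0) : ℝ) ^ n) := by
        refine mul_le_mul_of_nonneg_left (hop.trans hcoefbd) (by positivity)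
    _ ≤ n.factorial * ((((2 * c : ℝ≥0) : ℝ) + 1) * ((((2 * r₀⁻¹ : ℝ≥0) : ℝ)) + 1) ^ n) := by
        refine mul_le_mul_of_nonneg_left hmono (by positivity)
    _ = (((2 * c : ℝ≥0) : ℝ) + 1) * n.factorial * ((((2 * r₀⁻¹ : ℝ≥0) : ℝ)) + 1) ^ n := by ring

lemma glob_bound (f : ℝ → ℝ) (hf : ∀ x ∈ Set.Icc (0:ℝ) 1, AnalyticAt ℝ f x) :
    ∃ C ρ : ℝ, 1 ≤ C ∧ 1 ≤ ρ ∧ ∀ x ∈ Set.Icc (0:ℝ) 1, ∀ n : ℕ,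
      |iteratedDeriv n f x| ≤ C * n.factorial * ρ ^ n := by
  have h : ∀ x ∈ Set.Icc (0:ℝ) 1, ∃ ε > 0, ∃ C ρ : ℝ, 1 ≤ C ∧ 1 ≤ ρ ∧
      ∀ y ∈ Metric.ball x ε, ∀ n : ℕ, |iteratedDeriv n f y| ≤ C * n.factorial * ρ ^ n :=
    fun x hx => loc_bound f x (hf x hx)
  choose! ε hε C ρ hC hρ hbd using h
  obtain ⟨t, ht⟩ := isCompact_Icc.elim_nhds_subcover'
    (U := fun x hx => Metric.ball (x:ℝ) (ε x))
    (fun x hx => Metric.ball_mem_nhds _ (hε x hx))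
  refine ⟨1 + ∑ x ∈ t, C x, 1 + ∑ x ∈ t, ρ x, ?_, ?_, ?_⟩
  · have : (0:ℝ) ≤ ∑ x ∈ t, C x :=
      Finset.sum_nonneg fun x hx => le_trans zero_le_one (hC x x.2)
    linarith
  · have : (0:ℝ) ≤ ∑ x ∈ t, ρ x :=
      Finset.sum_nonneg fun x hx => le_trans zero_le_one (hρ x x.2)
    linarith
  · intro x hx n
    obtain ⟨x₀, hx₀t, hxball⟩ : ∃ x₀ ∈ t, x ∈ Metric.ball (x₀:ℝ) (ε x₀) := by
      have := ht hx
      simpa using this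
    have hb := hbd x₀ x₀.2 x hxball n
    have hsC : (0:ℝ) ≤ ∑ y ∈ t, C y :=
      Finset.sum_nonneg fun y hy => le_trans zero_le_one (hC y.1 y.2)
    have hsρ : (0:ℝ) ≤ ∑ y ∈ t, ρ y :=
      Finset.sum_nonneg fun y hy => le_trans zero_le_one (hρ y.1 y.2)
    have h1 : C x₀ ≤ 1 + ∑ y ∈ t, C y := by
      have : C x₀.1 ≤ ∑ y ∈ t, C y :=
        Finset.single_le_sum (f := fun y : ↑(Set.Icc (0:ℝ) 1) => C y.1)
          (fun y hy => le_trans zero_le_one (hC y.1 y.2)) hx₀t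
      linarith
    have h2 : ρ x₀ ≤ 1 + ∑ y ∈ t, ρ y := by
      have : ρ x₀.1 ≤ ∑ y ∈ t, ρ y :=
        Finset.single_le_sum (f := fun y : ↑(Set.Icc (0:ℝ) 1) => ρ y.1)
          (fun y hy => le_trans zero_le_one (hρ y.1 y.2)) hx₀t
      linarith
    have hρ0 : (0:ℝ) ≤ ρ x₀ := le_trans zero_le_one (hρ x₀.1 x₀.2)
    have hpow : ρ (x₀:ℝ) ^ n ≤ (1 + ∑ y ∈ t, ρ y) ^ n := pow_le_pow_left₀ hρ0 h2 n
    have hfac : (0:ℝ) ≤ (n.factorial : ℝ) := by positivity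
    calc |iteratedDeriv n f x| ≤ C x₀ * n.factorial * ρ x₀ ^ n := hb
      _ ≤ (1 + ∑ y ∈ t, C y) * n.factorial * ρ x₀ ^ n := by
          apply mul_le_mul_of_nonneg_right _ (by positivity)
          exact mul_le_mul_of_nonneg_right h1 hfac
      _ ≤ (1 + ∑ y ∈ t, C y) * n.factorial * (1 + ∑ y ∈ t, ρ y) ^ n := by
          apply mul_le_mul_of_nonneg_left hpow
          have : (0:ℝ) ≤ 1 + ∑ y ∈ t, C y := by linarith
          exact mul_nonneg this hfac

-- one descent step, positive-derivative version
lemma step_pos (g : ℝ → ℝ) (a b ε : ℝ) (hab : a < b)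
    (hsub : Set.Icc a b ⊆ Set.Icc (0:ℝ) 1)
    (hdiff : ∀ x ∈ Set.Icc (0:ℝ) 1, DifferentiableAt ℝ g x)
    (hε : 0 < ε)
    (hlow : ∀ y ∈ Set.Icc a b, ε < deriv g y) :
    ∃ a' b', a ≤ a' ∧ a' ≤ b' ∧ b' ≤ b ∧ b' - a' = (b - a) / 4 ∧
      ∀ y ∈ Set.Icc a' b', ε * ((b - a) / 4) < |g y| := by
  have mvt : ∀ u v, u ∈ Set.Icc a b → v ∈ Set.Icc a b → u < v →
      ε * (v - u) < g v - g u := by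
    intro u v hu hv huv
    have hsubuv : Set.Icc u v ⊆ Set.Icc a b := Set.Icc_subset_Icc hu.1 hv.2
    have hcg : ContinuousOn g (Set.Icc u v) := fun t ht =>
      (hdiff t (hsub (hsubuv ht))).continuousAt.continuousWithinAt
    have hder : ∀ t ∈ Set.Ioo u v, HasDerivAt g (deriv g t) t := fun t ht =>
      (hdiff t (hsub (hsubuv (Set.Ioo_subset_Icc_self ht)))).hasDerivAt
    obtain ⟨w, hw, heq⟩ := exists_hasDerivAt_eq_slope g (deriv g) huv hcg hder
    have hwab : w ∈ Set.Icc a b := hsubuv (Set.Ioo_subset_Icc_self hw)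
    have h1 := hlow w hwab
    rw [heq] at h1
    have h2 := (lt_div_iff₀ (sub_pos.2 huv)).1 h1
    linarith
  rcases le_or_gt 0 (g ((a+b)/2)) with hgm | hgm
  · refine ⟨(a+b)/2 + (b-a)/4, b, by linarith, by linarith, le_rfl, by ring, ?_⟩
    intro y hy
    have hy1 : (a+b)/2 + (b-a)/4 ≤ y := hy.1
    have hy2 : y ≤ b := hy.2
    have hmy : (a+b)/2 < y := by linarith
    have hmab : (a+b)/2 ∈ Set.Icc a b := ⟨by linarith, by linarith⟩
    have hyab : y ∈ Set.Icc a b := ⟨by linarith, hy2⟩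
    have h1 := mvt _ y hmab hyab hmy
    have h3 : ε * ((b-a)/4) ≤ ε * (y - (a+b)/2) :=
      mul_le_mul_of_nonneg_left (by linarith) hε.le
    have h4 := le_abs_self (g y)
    linarith
  · refine ⟨a, (a+b)/2 - (b-a)/4, le_rfl, by linarith, by linarith, by ring, ?_⟩
    intro y hy
    have hy1 : a ≤ y := hy.1
    have hy2 : y ≤ (a+b)/2 - (b-a)/4 := hy.2
    have hmy : y < (a+b)/2 := by linarith
    have hmab : (a+b)/2 ∈ Set.Icc a b := ⟨by linarith, by linarith⟩
    have hyab : y ∈ Set.Icc a b := ⟨hy1, by linarith⟩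
    have h1 := mvt y _ hyab hmab hmy
    have h3 : ε * ((b-a)/4) ≤ ε * ((a+b)/2 - y) :=
      mul_le_mul_of_nonneg_left (by linarith) hε.le
    have h4 := neg_abs_le (g y)
    linarith

-- one descent step
lemma step (g : ℝ → ℝ) (a b ε : ℝ) (hab : a < b)
    (hsub : Set.Icc a b ⊆ Set.Icc (0:ℝ) 1)
    (hdiff : ∀ x ∈ Set.Icc (0:ℝ) 1, DifferentiableAt ℝ g x)
    (hcont : ContinuousOn (deriv g) (Set.Icc a b))
    (hε : 0 < ε)
    (hlow : ∀ y ∈ Set.Icc a b, ε < |deriv g y|) :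
    ∃ a' b', a ≤ a' ∧ a' ≤ b' ∧ b' ≤ b ∧ b' - a' = (b - a) / 4 ∧
      ∀ y ∈ Set.Icc a' b', ε * ((b - a) / 4) < |g y| := by
  have ha := hlow a ⟨le_rfl, hab.le⟩
  rcases lt_trichotomy (deriv g a) 0 with hneg | hzero | hpos
  · -- negative everywhere; apply step_pos to -g
    have hall : ∀ y ∈ Set.Icc a b, ε < deriv (fun x => -g x) y := by
      intro y hy
      rw [deriv.fun_neg]
      by_contra hcon
      push_neg at hcon
      have hyabs := hlow y hy
      have hgy : ε < deriv g y := by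
        rcases lt_abs.1 hyabs with h | h
        · exact h
        · linarith
      have hay : a < y := by
        rcases eq_or_lt_of_le hy.1 with h | h
        · exfalso; rw [← h] at hgy; linarith
        · exact h
      have hiv := intermediate_value_Icc hay.le
        (hcont.mono (Set.Icc_subset_Icc le_rfl hy.2))
      have h0mem : (0:ℝ) ∈ Set.Icc (deriv g a) (deriv g y) := ⟨hneg.le, by linarith⟩
      obtain ⟨w, hwmem, hw0⟩ := hiv h0mem
      have := hlow w ⟨hwmem.1, le_trans hwmem.2 hy.2⟩
      rw [hw0] at this
      simp at this
      linarith
    obtain ⟨a', b', h1, h2, h3, h4, h5⟩ :=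
      step_pos (fun x => -g x) a b ε hab hsub (fun x hx => (hdiff x hx).neg) hε hall
    exact ⟨a', b', h1, h2, h3, h4, fun y hy => by simpa [abs_neg] using h5 y hy⟩
  · exfalso; rw [hzero] at ha; simp at ha; linarith
  · have hall : ∀ y ∈ Set.Icc a b, ε < deriv g y := by
      intro y hy
      by_contra hcon
      push_neg at hcon
      have hyabs := hlow y hy
      have hgy : deriv g y < -ε := by
        rcases lt_abs.1 hyabs with h | h
        · linarith
        · linarith
      have hay : a < y := by
        rcases eq_or_lt_of_le hy.1 with h | h
        · exfalso; rw [← h] at hgy; linarith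
        · exact h
      have hiv := intermediate_value_Icc' hay.le
        (hcont.mono (Set.Icc_subset_Icc le_rfl hy.2))
      have h0mem : (0:ℝ) ∈ Set.Icc (deriv g y) (deriv g a) := ⟨by linarith, by linarith⟩
      obtain ⟨w, hwmem, hw0⟩ := hiv h0mem
      have := hlow w ⟨hwmem.1, le_trans hwmem.2 hy.2⟩
      rw [hw0] at this
      simp at this
      linarith
    exact step_pos g a b ε hab hsub hdiff hε hall

-- iterated descent
lemma iter (f : ℝ → ℝ) (hA : ∀ x ∈ Set.Icc (0:ℝ) 1, AnalyticAt ℝ f x) :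
    ∀ (n : ℕ) (a b ε : ℝ), 0 < ε → a < b → Set.Icc a b ⊆ Set.Icc (0:ℝ) 1 →
    (∀ y ∈ Set.Icc a b, ε < |iteratedDeriv n f y|) →
    ∃ c d, a ≤ c ∧ c ≤ d ∧ d ≤ b ∧ (b - a) / 4 ^ n ≤ d - c ∧
      ∀ y ∈ Set.Icc c d, ∀ i ≤ n, ε * ((b - a) / 4 ^ n) ^ (n - i) < |iteratedDeriv i f y| := by
  have hAn : ∀ m : ℕ, ∀ x ∈ Set.Icc (0:ℝ) 1, AnalyticAt ℝ (iteratedDeriv m f) x := by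
    intro m x hx
    have := AnalyticOnNhd.iterated_deriv (fun y hy => hA y hy) m x hx
    rwa [← iteratedDeriv_eq_iterate] at this
  intro n
  induction n with
  | zero =>
    intro a b ε hε hab hsub hlow
    refine ⟨a, b, le_rfl, hab.le, le_rfl, by simp, ?_⟩
    intro y hy i hi
    interval_cases i
    simpa using hlow y hy
  | succ n ih =>
    intro a b ε hε hab hsub hlow
    have hdiff : ∀ x ∈ Set.Icc (0:ℝ) 1, DifferentiableAt ℝ (iteratedDeriv n f) x :=
      fun x hx => (hAn n x hx).differentiableAt
    have hcont : ContinuousOn (deriv (iteratedDeriv n f)) (Set.Icc a b) := by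
      intro x hx
      have h6 : ContinuousWithinAt (iteratedDeriv (n+1) f) (Set.Icc a b) x :=
        (hAn (n+1) x (hsub hx)).continuousAt.continuousWithinAt
      rwa [iteratedDeriv_succ] at h6
    have hlow' : ∀ y ∈ Set.Icc a b, ε < |deriv (iteratedDeriv n f) y| := by
      intro y hy
      rw [← iteratedDeriv_succ]
      exact hlow y hy
    obtain ⟨a', b', ha', hab', hb', hlen, hval⟩ :=
      step (iteratedDeriv n f) a b ε hab hsub hdiff hcont hε hlow'
    have hab'' : a' < b' := by
      have : (0:ℝ) < (b - a) / 4 := by linarith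
      linarith
    obtain ⟨c, d, h1, h2, h3, h4, h5⟩ := ih a' b' (ε * ((b - a) / 4))
      (by nlinarith) hab'' (fun y hy => hsub ⟨by linarith [hy.1], by linarith [hy.2]⟩)
      hval
    have hL : (b' - a') / 4 ^ n = (b - a) / 4 ^ (n + 1) := by
      rw [hlen, div_div, pow_succ, mul_comm]
    refine ⟨c, d, by linarith, h2, by linarith, by rw [← hL]; exact h4, ?_⟩
    intro y hy i hi
    have hycd : y ∈ Set.Icc a b := ⟨by linarith [hy.1], by linarith [hy.2]⟩
    rcases Nat.lt_or_ge i (n+1) with hin | hin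
    · -- i ≤ n
      have hin' : i ≤ n := Nat.lt_succ_iff.1 hin
      have hv := h5 y hy i hin'
      rw [hL] at hv
      have hee : n + 1 - i = (n - i) + 1 := by omega
      rw [hee]
      set L := (b - a) / 4 ^ (n + 1) with hLdef
      have hba : (0:ℝ) < b - a := by linarith
      have hL0 : 0 < L := div_pos hba (by positivity)
      have hLle : L ≤ (b - a) / 4 := by
        rw [hLdef]
        apply div_le_div_of_nonneg_left (by linarith) (by norm_num) ?_
        calc (4:ℝ) = 4 ^ 1 := by norm_num
          _ ≤ 4 ^ (n+1) := by
              apply pow_le_pow_right₀ (by norm_num)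
              omega
      calc ε * L ^ (n - i + 1) = (ε * L) * L ^ (n - i) := by ring
        _ ≤ (ε * ((b - a) / 4)) * L ^ (n - i) := by
            apply mul_le_mul_of_nonneg_right _ (pow_nonneg hL0.le _)
            exact mul_le_mul_of_nonneg_left hLle hε.le
        _ < |iteratedDeriv i f y| := hv
    · -- i = n+1
      have hieq : i = n + 1 := le_antisymm hi hin
      subst hieq
      have : n + 1 - (n + 1) = 0 := by omega
      rw [this, pow_zero, mul_one]
      exact hlow y hycd

lemma pick (x h : ℝ) (hx : x ∈ Set.Icc (0:ℝ) 1) (hh : 0 < h) (hh2 : h ≤ 1/2) :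
    ∃ a b : ℝ, a ≤ x ∧ x ≤ b ∧ b - a = h ∧ Set.Icc a b ⊆ Set.Icc (0:ℝ) 1 := by
  obtain ⟨hx0, hx1⟩ := hx
  rcases le_or_gt x (1/2) with hc | hc
  · exact ⟨x, x + h, le_rfl, by linarith, by ring,
      fun y hy => ⟨by linarith [hy.1], by linarith [hy.2]⟩⟩
  · exact ⟨x - h, x, by linarith, le_rfl, by ring,
      fun y hy => ⟨by linarith [hy.1], by linarith [hy.2]⟩⟩

lemma mvt_pt (g : ℝ → ℝ) (hdiff : ∀ x ∈ Set.Icc (0:ℝ) 1, DifferentiableAt ℝ g x)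
    (a b u v κ h : ℝ) (hsub : Set.Icc a b ⊆ Set.Icc (0:ℝ) 1)
    (hu : u ∈ Set.Icc a b) (hv : v ∈ Set.Icc a b)
    (hκ : 0 < κ) (hh : 0 < h) (hlen : b - a ≤ h)
    (hgu : κ < |g u|) (hgv : |g v| ≤ κ / 2) :
    ∃ ξ ∈ Set.Icc (0:ℝ) 1, κ / (2 * h) < |deriv g ξ| := by
  have hne : u ≠ v := fun he => by rw [he] at hgu; linarith
  have key : κ / 2 < |g u - g v| :=
    lt_of_lt_of_le (by linarith) (abs_sub_abs_le_abs_sub _ _)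
  obtain ⟨p, q, hpq, hp, hq, hgap⟩ : ∃ p q, p < q ∧ p ∈ Set.Icc a b ∧ q ∈ Set.Icc a b ∧
      κ / 2 < |g q - g p| := by
    rcases hne.lt_or_gt with h1 | h1
    · exact ⟨u, v, h1, hu, hv, by rw [abs_sub_comm]; exact key⟩
    · exact ⟨v, u, h1, hv, hu, key⟩
  have hsubpq : Set.Icc p q ⊆ Set.Icc a b := Set.Icc_subset_Icc hp.1 hq.2
  have hcg : ContinuousOn g (Set.Icc p q) := fun t ht =>
    (hdiff t (hsub (hsubpq ht))).continuousAt.continuousWithinAt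
  have hder : ∀ t ∈ Set.Ioo p q, HasDerivAt g (deriv g t) t := fun t ht =>
    (hdiff t (hsub (hsubpq (Set.Ioo_subset_Icc_self ht)))).hasDerivAt
  obtain ⟨w, hw, heq⟩ := exists_hasDerivAt_eq_slope g (deriv g) hpq hcg hder
  refine ⟨w, hsub (hsubpq (Set.Ioo_subset_Icc_self hw)), ?_⟩
  have hqp : (0:ℝ) < q - p := by linarith
  have hqph : q - p ≤ h := by
    have := hp.1; have := hq.2; linarith
  have h2 : (κ/2)/h ≤ (κ/2)/(q-p) :=
    div_le_div_of_nonneg_left (by linarith) hqp hqph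
  have h3 : (κ/2)/(q-p) < |g q - g p|/(q-p) := by gcongr
  have h4 : |deriv g w| = |g q - g p|/(q-p) := by
    rw [heq, abs_div, abs_of_pos hqp]
  rw [h4]
  have h5 : κ / (2*h) = (κ/2)/h := by ring
  linarith

lemma smoothAll (f : ℝ → ℝ) (hf : ∀ x ∈ Set.Icc (0:ℝ) 1, AnalyticAt ℝ f x) :
    ∀ m : ℕ, ∀ x ∈ Set.Icc (0:ℝ) 1, AnalyticAt ℝ (iteratedDeriv m f) x := by
  intro m x hx
  have := AnalyticOnNhd.iterated_deriv (fun y hy => hf y hy) m x hx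
  rwa [← iteratedDeriv_eq_iterate] at this

theorem stmt_11 (f : ℝ → ℝ) (hf : ∀ x ∈ Set.Icc (0:ℝ) 1, AnalyticAt ℝ f x) :
    ∃ B > (1:ℝ), ∃ k₀ : ℕ, 1 ≤ k₀ ∧
      ∀ k : ℕ, k₀ ≤ k → ∀ κ : ℝ, 0 < κ → κ ≤ 1 →
        (∃ x ∈ Set.Icc (0:ℝ) 1, κ < |iteratedDeriv (k + 1) f x|) →
        ∃ c d : ℝ, 0 ≤ c ∧ c ≤ d ∧ d ≤ 1 ∧
          κ / (128 * B * k * 4 ^ (2 * k + 1) * (Nat.factorial k : ℝ)) < d - c ∧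
          ∀ y ∈ Set.Icc c d, ∀ i : ℕ, i ≤ k + 1 →
            (κ ^ 2 / (64 * B * k * 4 ^ (2 * k + 1) * (Nat.factorial k : ℝ))) ^ (k + 2 - i)
              < |iteratedDeriv i f y| := by
  obtain ⟨C, ρ, hC1, hρ1, hbd⟩ := glob_bound f hf
  have hAn := smoothAll f hf
  -- choose k₀ from factorial growth
  have hten := FloorSemiring.tendsto_pow_div_factorial_atTop (K := ℝ) (8*ρ)
  have hT : (0:ℝ) < 1/(C * (8*ρ)^3 + 1) := by positivity
  have hev : ∀ᶠ m : ℕ in Filter.atTop,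
      (8*ρ)^m / (m.factorial : ℝ) < 1/(C*(8*ρ)^3+1) :=
    hten.eventually_lt_const hT
  obtain ⟨N, hN⟩ := Filter.eventually_atTop.1 hev
  refine ⟨2, one_lt_two, max N 1, le_max_right _ _, ?_⟩
  intro k hk κ hκ0 hκ1 hex
  obtain ⟨x₀, hx₀mem, hx₀⟩ := hex
  have hk1 : 1 ≤ k := le_trans (le_max_right N 1) hk
  have hkN : N ≤ k := le_trans (le_max_left N 1) hk
  have hkR : (1:ℝ) ≤ (k:ℝ) := by exact_mod_cast hk1
  have hK1 : (1:ℝ) ≤ (k.factorial : ℝ) := by exact_mod_cast Nat.one_le_iff_ne_zero.2 k.factorial_ne_zero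
  have hfact : C * (8*ρ)^(k+3) ≤ (k.factorial:ℝ) := by
    have h6 := hN k hkN
    have hfk : (0:ℝ) < (k.factorial:ℝ) := by positivity
    have h7 : (8*ρ)^k * (C*(8*ρ)^3 + 1) < 1 * (k.factorial:ℝ) :=
      (div_lt_div_iff₀ hfk (by positivity)).1 h6
    have h8 : (8*ρ)^(k+3) = (8*ρ)^k * (8*ρ)^3 := by rw [← pow_add]
    have h9 : (0:ℝ) ≤ (8*ρ)^k := by positivity
    have h10 : C*(8*ρ)^(k+3) = (8*ρ)^k * (C*(8*ρ)^3) := by rw [h8]; ring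
    rw [h10]
    have h11 : (8*ρ)^k * (C*(8*ρ)^3) ≤ (8*ρ)^k * (C*(8*ρ)^3+1) :=
      mul_le_mul_of_nonneg_left (by linarith) h9
    linarith
  set K := (k.factorial : ℝ) with hKdef
  set P := (4:ℝ)^(2*k+1) with hPdef
  set F := 64 * 2 * (k:ℝ) * P * K with hFdef
  have hP0 : (0:ℝ) < P := by positivity
  have hF0 : (0:ℝ) < F := by
    rw [hFdef]; positivity
  have hPsplit : P = 4^(k+1) * 4^k := by
    rw [hPdef, ← pow_add]; congr 1; omega
  have h4k : (1:ℝ) ≤ 4^k := one_le_pow₀ (by norm_num)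
  have h4k1 : (0:ℝ) < 4^(k+1) := by positivity
  have hFge : 128*4^(k+1) ≤ F := by
    calc (128:ℝ)*4^(k+1) = 128*1*(4^(k+1)*1)*1 := by ring
      _ ≤ 128*(k:ℝ)*(4^(k+1)*4^k)*K := by
          gcongr <;> first | exact hkR | exact hK1 | exact h4k | positivity
      _ = F := by rw [hFdef, hPsplit]; ring
  set h₀ := 4^(k+1)*κ/F with hh₀def
  have hh₀pos : 0 < h₀ := by rw [hh₀def]; positivity
  have hh₀half : h₀ ≤ 1/2 := by
    rw [hh₀def, div_le_iff₀ hF0]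
    have := mul_le_of_le_one_right (le_of_lt h4k1) hκ1
    linarith [hFge]
  have hLW : h₀/4^(k+1) = κ/F := by
    rw [hh₀def]
    field_simp
  have h2F : (128:ℝ) * 2 * (k:ℝ) * P * K = 2*F := by rw [hFdef]; ring
  have hlenbound : κ / (128 * 2 * (k:ℝ) * P * K) < κ/F := by
    rw [h2F]
    exact div_lt_div_of_pos_left hκ0 hF0 (by linarith)
  obtain ⟨a0, b0, ha0x, hxb0, hba0, hsub0⟩ := pick x₀ h₀ hx₀mem hh₀pos hh₀half
  have hab0 : a0 < b0 := by linarith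
  by_cases hcase : ∀ y ∈ Set.Icc a0 b0, κ/2 < |iteratedDeriv (k+1) f y|
  · obtain ⟨c, d, hc, hcd, hd, hlen, hval⟩ :=
      iter f hf (k+1) a0 b0 (κ/2) (by linarith) hab0 hsub0 hcase
    rw [hba0, hLW] at hlen
    refine ⟨c, d, ?_, hcd, ?_, ?_, ?_⟩
    · have := (hsub0 ⟨le_rfl, hab0.le⟩).1; linarith
    · have := (hsub0 ⟨hab0.le, le_rfl⟩).2; linarith
    · linarith
    · intro y hy i hi
      have hv := hval y hy i hi
      rw [hba0, hLW] at hv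
      refine lt_of_le_of_lt ?_ hv
      have he : k+2-i = (k+1-i)+1 := by omega
      rw [he, pow_succ]
      have h1 : (κ^2/F)^(k+1-i) ≤ (κ/F)^(k+1-i) := by
        apply pow_le_pow_left₀ (by positivity)
        apply div_le_div_of_nonneg_right ?_ hF0.le
        nlinarith
      have h4k1ge : (4:ℝ) ≤ 4^(k+1) := by
        calc (4:ℝ) = 4^1 := (pow_one 4).symm
          _ ≤ 4^(k+1) := pow_le_pow_right₀ (by norm_num) (by omega)
      have hF512 : (512:ℝ) ≤ F := by linarith [hFge, h4k1ge]
      have h2 : κ^2/F ≤ κ/2 := by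
        rw [div_le_div_iff₀ hF0 (by norm_num)]
        have w1 : κ*512 ≤ κ*F := mul_le_mul_of_nonneg_left hF512 hκ0.le
        have w2 : κ*κ ≤ κ*1 := mul_le_mul_of_nonneg_left hκ1 hκ0.le
        have w3 : κ^2 = κ*κ := sq κ
        linarith
      calc (κ^2/F)^(k+1-i) * (κ^2/F) ≤ (κ/F)^(k+1-i) * (κ/2) :=
            mul_le_mul h1 h2 (by positivity) (by positivity)
        _ = κ/2 * (κ/F)^(k+1-i) := by ring
  · push_neg at hcase
    obtain ⟨y₀, hy₀mem, hy₀⟩ := hcase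
    have hd1 : ∀ x ∈ Set.Icc (0:ℝ) 1, DifferentiableAt ℝ (iteratedDeriv (k+1) f) x :=
      fun x hx => (hAn (k+1) x hx).differentiableAt
    obtain ⟨ξ, hξmem, hξ⟩ := mvt_pt (iteratedDeriv (k+1) f) hd1 a0 b0 x₀ y₀ κ h₀
      hsub0 ⟨ha0x, hxb0⟩ hy₀mem hκ0 hh₀pos (by linarith) hx₀ hy₀
    rw [← iteratedDeriv_succ] at hξ
    set κ₁ := F/(2*4^(k+1)) with hκ₁def
    have hκ₁eq : κ/(2*h₀) = κ₁ := by
      rw [hh₀def, hκ₁def]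
      field_simp
    rw [hκ₁eq] at hξ
    have hκ₁pos : 0 < κ₁ := by rw [hκ₁def]; positivity
    have hκ₁2ge1 : (1:ℝ) ≤ κ₁/2 := by
      rw [hκ₁def, div_div, le_div_iff₀ (by positivity), one_mul]
      linarith [hFge, h4k1]
    set h₁ := 4^(k+2)*κ/F with hh₁def
    have hh₁pos : 0 < h₁ := by rw [hh₁def]; positivity
    have h4k2 : (4:ℝ)^(k+2) = 4*4^(k+1) := by rw [pow_succ]; ring
    have hh₁half : h₁ ≤ 1/2 := by
      rw [hh₁def, div_le_iff₀ hF0, h4k2]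
      have h30 : (0:ℝ) ≤ 4*4^(k+1) := by positivity
      have := mul_le_of_le_one_right h30 hκ1
      linarith [hFge]
    have hLW1 : h₁/4^(k+2) = κ/F := by
      rw [hh₁def]
      field_simp
    obtain ⟨a1, b1, ha1, hb1, hba1, hsub1⟩ := pick ξ h₁ hξmem hh₁pos hh₁half
    have hab1 : a1 < b1 := by linarith
    by_cases hcase2 : ∀ y ∈ Set.Icc a1 b1, κ₁/2 < |iteratedDeriv (k+2) f y|
    · obtain ⟨c, d, hc, hcd, hd, hlen, hval⟩ :=
        iter f hf (k+2) a1 b1 (κ₁/2) (by linarith) hab1 hsub1 hcase2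
      rw [hba1, hLW1] at hlen
      refine ⟨c, d, ?_, hcd, ?_, ?_, ?_⟩
      · have := (hsub1 ⟨le_rfl, hab1.le⟩).1; linarith
      · have := (hsub1 ⟨hab1.le, le_rfl⟩).2; linarith
      · linarith
      · intro y hy i hi
        have hv := hval y hy i (by omega)
        rw [hba1, hLW1] at hv
        have he2 : k+2-i = (k+2)-i := rfl
        refine lt_of_le_of_lt ?_ hv
        calc (κ^2/F)^(k+2-i) = κ^(k+2-i) * (κ/F)^(k+2-i) := by
              rw [← mul_pow]; congr 1; ring
          _ ≤ 1 * (κ/F)^(k+2-i) := by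
              apply mul_le_mul_of_nonneg_right (pow_le_one₀ hκ0.le hκ1) (by positivity)
          _ ≤ (κ₁/2) * (κ/F)^(k+2-i) := by
              apply mul_le_mul_of_nonneg_right hκ₁2ge1 (by positivity)
    · exfalso
      push_neg at hcase2
      obtain ⟨y₁, hy₁mem, hy₁⟩ := hcase2
      have hd2 : ∀ x ∈ Set.Icc (0:ℝ) 1, DifferentiableAt ℝ (iteratedDeriv (k+2) f) x :=
        fun x hx => (hAn (k+2) x hx).differentiableAt
      obtain ⟨ξ₂, hξ₂mem, hξ₂⟩ := mvt_pt (iteratedDeriv (k+2) f) hd2 a1 b1 ξ y₁ κ₁ h₁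
        hsub1 ⟨ha1, hb1⟩ hy₁mem hκ₁pos hh₁pos (by linarith) hξ hy₁
      rw [← iteratedDeriv_succ] at hξ₂
      have hup := hbd ξ₂ hξ₂mem (k+3)
      -- κ₁/(2h₁) value
      have hval2 : κ₁/(2*h₁) = F^2/(4*4^(k+1)*4^(k+2)*κ) := by
        rw [hκ₁def, hh₁def]
        field_simp
        ring
      rw [hval2] at hξ₂
      -- ceiling chain
      have c3 : ((k:ℝ)+3) ≤ 2^(k+3) := by
        have := Nat.lt_two_pow_self (n := k+3)
        have h := this.le
        exact_mod_cast h
      have c2 : ((k:ℝ)+2) ≤ 2^(k+3) := by linarith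
      have c1 : ((k:ℝ)+1) ≤ 2^(k+3) := by linarith
      have m1 : ((k:ℝ)+3)*((k:ℝ)+2) ≤ 2^(k+3)*2^(k+3) :=
        mul_le_mul c3 c2 (by positivity) (by positivity)
      have t1 : ((k:ℝ)+3)*((k:ℝ)+2)*((k:ℝ)+1) ≤ 2^(k+3)*2^(k+3)*2^(k+3) :=
        mul_le_mul m1 c1 (by positivity) (by positivity)
      have h8 : (8:ℝ)^(k+3) = 2^(k+3)*2^(k+3)*2^(k+3) := by
        rw [show (8:ℝ) = 2*2*2 by norm_num, mul_pow, mul_pow]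
      have hfc : ((k+3).factorial:ℝ) = ((k:ℝ)+3)*((k:ℝ)+2)*((k:ℝ)+1)*K := by
        rw [hKdef]
        rw [show k+3 = (k+2)+1 from rfl, Nat.factorial_succ,
            show k+2 = (k+1)+1 from rfl, Nat.factorial_succ, Nat.factorial_succ]
        push_cast
        ring
      have e1 : C * ((k+3).factorial:ℝ) * ρ^(k+3) ≤ K * K := by
        rw [hfc]
        have hK0 : (0:ℝ) ≤ K := by linarith
        have hC0 : (0:ℝ) ≤ C := by linarith
        calc C*(((k:ℝ)+3)*((k:ℝ)+2)*((k:ℝ)+1)*K)*ρ^(k+3)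
            ≤ C*((8:ℝ)^(k+3)*K)*ρ^(k+3) := by
              apply mul_le_mul_of_nonneg_right _ (by positivity)
              apply mul_le_mul_of_nonneg_left _ hC0
              apply mul_le_mul_of_nonneg_right _ hK0
              rw [h8]; exact t1
          _ = (C*(8*ρ)^(k+3))*K := by rw [mul_pow]; ring
          _ ≤ K*K := mul_le_mul_of_nonneg_right hfact hK0
      -- numeric lower bound for the slope
      have hP1 : (4:ℝ)^(k+1) ≤ P := by
        rw [hPdef]
        apply pow_le_pow_right₀ (by norm_num)
        omega
      have hP2 : (4:ℝ)^(k+2) ≤ P := by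
        rw [hPdef]
        apply pow_le_pow_right₀ (by norm_num)
        omega
      have e2 : K*K < F^2/(4*4^(k+1)*4^(k+2)*κ) := by
        rw [lt_div_iff₀ (by positivity)]
        have hFsq : F^2 = 16384*(k:ℝ)^2*(P*P)*(K*K) := by rw [hFdef]; ring
        rw [hFsq]
        have h4k2pos : (0:ℝ) < 4^(k+2) := by positivity
        have hPP : 4^(k+1)*4^(k+2) ≤ P*P :=
          mul_le_mul hP1 hP2 (by positivity) (by positivity)
        have hK0' : (0:ℝ) < K := by linarith
        have hKK0 : (0:ℝ) < K*K := mul_pos hK0' hK0'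
        have hk2 : (1:ℝ) ≤ (k:ℝ)^2 := by
          rw [sq]
          calc (1:ℝ) = 1*1 := by norm_num
            _ ≤ (k:ℝ)*(k:ℝ) := mul_le_mul hkR hkR zero_le_one (by linarith)
        have s1 : 4*4^(k+1)*4^(k+2)*κ ≤ 4*(P*P) := by
          have w1 : 4^(k+1)*4^(k+2)*κ ≤ 4^(k+1)*4^(k+2)*1 :=
            mul_le_mul_of_nonneg_left hκ1 (by positivity)
          have w2 : 4^(k+1)*4^(k+2)*κ ≤ P*P := by
            rw [mul_one] at w1; linarith
          calc 4*4^(k+1)*4^(k+2)*κ = 4*(4^(k+1)*4^(k+2)*κ) := by ring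
            _ ≤ 4*(P*P) := by linarith
        have s2 : K*K*(4*4^(k+1)*4^(k+2)*κ) ≤ K*K*(4*(P*P)) :=
          mul_le_mul_of_nonneg_left s1 hKK0.le
        have s3 : K*K*(4*(P*P)) < 16384*(k:ℝ)^2*(P*P)*(K*K) := by
          have hPPpos : (0:ℝ) < P*P := by positivity
          have w4 : (4:ℝ) < 16384*(k:ℝ)^2 := by linarith
          have w5 : (P*P)*(K*K)*4 < (P*P)*(K*K)*(16384*(k:ℝ)^2) := by
            apply mul_lt_mul_of_pos_left w4
            exact mul_pos hPPpos hKK0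
          calc K*K*(4*(P*P)) = (P*P)*(K*K)*4 := by ring
            _ < (P*P)*(K*K)*(16384*(k:ℝ)^2) := w5
            _ = 16384*(k:ℝ)^2*(P*P)*(K*K) := by ring
        linarith
      linarith
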